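/- Let Ω = {ω₀, ω₁} with rewards r(ω₀) ≤ r(ω₁) in [0,1]. Let F₀, F₁ ∈ [0,1] denote probabilities of outcome ω₁ under two actions (so outcome ω₀ has probabilities 1−F₀, 1−F₁), with costs c₀, c₁ ∈ [0,1]. Let p̂ : Ω → ℝ≥0 be a contract with p̂(ω₀) = 0 and p̂(ω₁) ≤ r(ω₁) − r(ω₀). If F₁·p̂(ω₁) − c₁ ≥ F₀·p̂(ω₁) − c₀ and F₁·p̂(ω₁) − c₁ ≥ 0 (the action with probability F₁ is the agent's best response to p̂), and moreover p(ω₁) ≥ r(ω₁) − r(ω₀) for some original contract p : Ω → ℝ≥0, then the principal's utility under p̂, namely F₁·(r(ω₁) − p̂(ω₁)) + (1−F₁)·r(ω₀), is at least F₀·(r(ω₁) − p(ω₁)) + (1−F₀)·(r(ω₀) − p(ω₀)). -/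
import Mathlib


theorem two_outcome_dominance (r0 r1 F0 F1 c0 c1 phat1 p0 p1 : ℝ)
    (hr : r0 ≤ r1) (hr0 : 0 ≤ r0) (hr1 : r1 ≤ 1)
    (hF00 : 0 ≤ F0) (hF01 : F0 ≤ 1) (hF10 : 0 ≤ F1) (hF11 : F1 ≤ 1)
    (hc00 : 0 ≤ c0) (hc01 : c0 ≤ 1) (hc10 : 0 ≤ c1) (hc11 : c1 ≤ 1)
    (hphat0 : 0 ≤ phat1) (hphat : phat1 ≤ r1 - r0)
    (hbr : F0 * phat1 - c0 ≤ F1 * phat1 - c1)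
    (hir : 0 ≤ F1 * phat1 - c1)
    (hp0 : 0 ≤ p0) (hp1 : r1 - r0 ≤ p1) :
    F0 * (r1 - p1) + (1 - F0) * (r0 - p0) ≤ F1 * (r1 - phat1) + (1 - F1) * r0 := by
  nlinarith [mul_nonneg hF00 hp0, mul_nonneg (sub_nonneg.2 hF01) hp0, mul_le_mul_of_nonneg_left hp1 hF00, mul_le_mul_of_nonneg_left hphat hF10, mul_nonneg (sub_nonneg.2 hF11) (sub_nonneg.2 (le_trans hphat (by linarith : r1 - r0 ≤ r1 - r0)))]
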